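/- Let G be a finite group and let S ⊆ G be a subset with 1 ∉ S, S = S⁻¹, and S closed under conjugation (g⁻¹sg ∈ S for all s ∈ S, g ∈ G). Then for every complex irreducible character χ of G, the complex number θ_χ = (1/χ(1))·∑_{s ∈ S} χ(s) is an eigenvalue of the adjacency matrix of the Cayley graph Cay(G,S) (viewed as a complex matrix). -/

import Mathlib

open scoped Classical

/-- The adjacency matrix of the undirected Cayley graph `Cay(G,S)`:
the `(a,b)` entry is `1` if `a * b⁻¹ ∈ S` and `0` otherwise. -/
noncomputable def cayleyAdjMatrix {G : Type*} [Group G] [Fintype G] (S : Set G) :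
    Matrix G G ℝ :=
  Matrix.of fun a b => if a * b⁻¹ ∈ S then (1 : ℝ) else 0

/-- A finite group `G` is *Cayley integral* if for every subset `S ⊆ G` with `1 ∉ S` and
`S = S⁻¹`, every eigenvalue of the adjacency matrix of the Cayley graph `Cay(G,S)`
is an integer. -/
def IsCayleyIntegral (G : Type*) [Group G] [Fintype G] : Prop :=
  ∀ S : Set G, (1 : G) ∉ S → (∀ s ∈ S, s⁻¹ ∈ S) →
    ∀ μ ∈ spectrum ℝ (cayleyAdjMatrix S), ∃ k : ℤ, μ = (k : ℝ)

/-- If `S` is an inverse-closed, conjugation-invariant subset of `G \ {1}`, then for every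
irreducible complex character `χ` of `G`, the number `(1/χ(1)) ∑_{s ∈ S} χ(s)` is an
eigenvalue of the (complex) adjacency matrix of `Cay(G,S)`. -/
theorem character_eigenvalue_of_cayley (G : Type) [Group G] [Fintype G]
    (S : Set G) (h1 : (1 : G) ∉ S) (hinv : ∀ s ∈ S, s⁻¹ ∈ S)
    (hconj : ∀ s ∈ S, ∀ g : G, g⁻¹ * s * g ∈ S)
    (V : FDRep ℂ G) (hV : CategoryTheory.Simple V) :
    ∃ v : G → ℂ, v ≠ 0 ∧
      (Matrix.of fun a b : G => if a * b⁻¹ ∈ S then (1 : ℂ) else 0).mulVec v =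
        ((V.character 1)⁻¹ * ∑ s ∈ S.toFinset, V.character s) • v := by
  classical
  set χ := V.character with hχ
  set Tlin : V →ₗ[ℂ] V := ∑ s ∈ S.toFinset, V.ρ s with hTlin
  -- Tlin commutes with the action
  have hcomm : ∀ g : G, (V.ρ g) * Tlin = Tlin * (V.ρ g) := by
    intro g
    rw [hTlin, Finset.mul_sum, Finset.sum_mul]
    simp only [← map_mul]
    refine Finset.sum_nbij' (fun s => g * s * g⁻¹) (fun s => g⁻¹ * s * g) ?_ ?_ ?_ ?_ ?_
    · intro s hs
      rw [Set.mem_toFinset] at hs ⊢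
      simpa using hconj s hs g⁻¹
    · intro s hs
      rw [Set.mem_toFinset] at hs ⊢
      exact hconj s hs g
    · intro s _; group
    · intro s _; group
    · intro s _; congr 1; group
  -- the bundled morphism
  let T : V ⟶ V := ⟨FGModuleCat.ofHom Tlin, fun g => FGModuleCat.hom_ext (hcomm g).symm⟩
  obtain ⟨c, hc⟩ := CategoryTheory.endomorphism_simple_eq_smul_id (X := V) ℂ T
  have hThom : Tlin = c • (LinearMap.id : V →ₗ[ℂ] V) := by
    have := congrArg Action.Hom.hom hc
    rw [Action.smul_hom] at this
    exact congrArg (fun f => f.hom.hom) this.symm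
  have hnt : Nontrivial V := by
    by_contra h
    rw [not_nontrivial_iff_subsingleton] at h
    exact CategoryTheory.id_nonzero V (Action.Hom.ext (FGModuleCat.hom_ext (LinearMap.ext fun v => @Subsingleton.elim _ h _ _)))
  have hχ1 : χ 1 ≠ 0 := by
    rw [hχ, FDRep.char_one]
    exact_mod_cast Module.finrank_pos.ne'
  have htr : ∑ s ∈ S.toFinset, χ s = c * χ 1 := by
    have h2 := congrArg (LinearMap.trace ℂ V) hThom
    rw [hTlin, map_sum] at h2
    rw [hχ]
    simp only [FDRep.character]
    rw [h2, map_smul, LinearMap.trace_id, map_one, LinearMap.trace_one, smul_eq_mul]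
  have hcθ : (χ 1)⁻¹ * ∑ s ∈ S.toFinset, χ s = c := by
    rw [htr, mul_comm c, ← mul_assoc, inv_mul_cancel₀ hχ1, one_mul]
  have hsuminv : ∑ s ∈ S.toFinset, V.ρ s⁻¹ = Tlin := by
    rw [hTlin]
    refine Finset.sum_nbij' (fun s => s⁻¹) (fun s => s⁻¹) ?_ ?_ ?_ ?_ ?_
    · intro s hs; rw [Set.mem_toFinset] at hs ⊢; exact hinv s hs
    · intro s hs; rw [Set.mem_toFinset] at hs ⊢; exact hinv s hs
    · intro s _; simp
    · intro s _; simp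
    · intro s _; rfl
  refine ⟨χ, fun h => hχ1 (congrFun h 1), ?_⟩
  rw [hcθ]
  funext a
  rw [Matrix.mulVec, Pi.smul_apply, smul_eq_mul]
  show ∑ b, (if a * b⁻¹ ∈ S then (1:ℂ) else 0) * χ b = c * χ a
  have step1 : ∑ b, (if a * b⁻¹ ∈ S then (1:ℂ) else 0) * χ b
      = ∑ s ∈ S.toFinset, χ (s⁻¹ * a) := by
    simp only [boole_mul]
    rw [← Finset.sum_filter]
    refine (Finset.sum_nbij' (fun s => s⁻¹ * a) (fun b => a * b⁻¹) ?_ ?_ ?_ ?_ ?_).symm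
    · intro s hs
      rw [Set.mem_toFinset] at hs
      simp only [Finset.mem_filter, Finset.mem_univ, true_and]
      simpa using hs
    · intro b hb
      simp only [Finset.mem_filter] at hb
      rw [Set.mem_toFinset]
      exact hb.2
    · intro s _; group
    · intro b _; group
    · intro s _; rfl
  rw [step1]
  simp only [hχ, FDRep.character, map_mul]
  rw [← map_sum, ← Finset.sum_mul, hsuminv, hThom, smul_mul_assoc, map_smul, smul_eq_mul,
    Module.End.mul_eq_comp, LinearMap.id_comp]
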